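/- Let n ≥ 3 and x : Fin n → ℝ with S_1(x) ≥ 0 and S_2(x) ≥ 0. Then 3n·S_3(x) ≤ (n−2)·S_1(x)·S_2(x); equivalently, −3·S_3(x) ≥ −((n−2)/n)·S_1(x)·S_2(x). -/

import Mathlib

set_option maxHeartbeats 1000000

open Finset

/-- The `r`-th elementary symmetric polynomial of `x : Fin n → ℝ`:
`S_r(x) = Σ_{i_1 < ⋯ < i_r} x(i_1) ⋯ x(i_r)`. -/
noncomputable def esymm (n r : ℕ) (x : Fin n → ℝ) : ℝ :=
  ∑ s ∈ Finset.univ.powersetCard r, ∏ i ∈ s, x i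

lemma eval_esymm (n r : ℕ) (x : Fin n → ℝ) :
    MvPolynomial.eval x (MvPolynomial.esymm (Fin n) ℝ r) = esymm n r x := by
  simp [MvPolynomial.esymm, esymm, MvPolynomial.eval_prod]

lemma esymm_one_eq (n : ℕ) (x : Fin n → ℝ) : esymm n 1 x = ∑ i, x i := by
  simp [esymm, Finset.powersetCard_one]

lemma esymm_two_eq (n : ℕ) (x : Fin n → ℝ) :
    2 * esymm n 2 x = (∑ i, x i) * (∑ i, x i) - ∑ i, (x i) ^ 2 := by
  have h := MvPolynomial.mul_esymm_eq_sum (Fin n) ℝ 2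
  have h2 := congrArg (MvPolynomial.eval x) h
  simp only [Finset.sum_filter, Finset.Nat.sum_antidiagonal_eq_sum_range_succ_mk] at h2
  simp only [Finset.sum_range_succ, Finset.sum_range_zero] at h2
  norm_num [MvPolynomial.esymm_zero, MvPolynomial.esymm_one] at h2
  rw [eval_esymm] at h2
  simp only [MvPolynomial.psum, map_sum, map_pow, MvPolynomial.eval_X] at h2
  linarith [h2]

lemma esymm_three_eq (n : ℕ) (x : Fin n → ℝ) :
    3 * esymm n 3 x = esymm n 2 x * (∑ i, x i) - (∑ i, x i) * (∑ i, (x i) ^ 2)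
      + ∑ i, (x i) ^ 3 := by
  have h := MvPolynomial.mul_esymm_eq_sum (Fin n) ℝ 3
  have h2 := congrArg (MvPolynomial.eval x) h
  simp only [Finset.sum_filter, Finset.Nat.sum_antidiagonal_eq_sum_range_succ_mk] at h2
  simp only [Finset.sum_range_succ, Finset.sum_range_zero] at h2
  norm_num [MvPolynomial.esymm_zero, MvPolynomial.esymm_one, eval_esymm] at h2
  simp only [MvPolynomial.psum, map_sum, map_pow, MvPolynomial.eval_X] at h2
  linarith [h2]

/-- Sum of a quartic polynomial over all coordinates. -/
lemma sum_poly4 (n : ℕ) (x : Fin n → ℝ) (c4 c3 c2 c1 c0 : ℝ) :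
    ∑ j, (c4 * (x j) ^ 4 + c3 * (x j) ^ 3 + c2 * (x j) ^ 2 + c1 * (x j) + c0)
      = c4 * (∑ j, (x j) ^ 4) + c3 * (∑ j, (x j) ^ 3) + c2 * (∑ j, (x j) ^ 2)
        + c1 * (∑ j, x j) + n * c0 := by
  simp [Finset.sum_add_distrib, ← Finset.mul_sum, Finset.card_univ, mul_comm]

theorem newton_S1_S2_S3 (n : ℕ) (hn : 3 ≤ n) (x : Fin n → ℝ)
    (hS1 : 0 ≤ esymm n 1 x) (hS2 : 0 ≤ esymm n 2 x) :
    3 * (n : ℝ) * esymm n 3 x ≤ ((n : ℝ) - 2) * esymm n 1 x * esymm n 2 x ∧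
    -(((n : ℝ) - 2) / (n : ℝ)) * (esymm n 1 x * esymm n 2 x) ≤
      -(3 * esymm n 3 x) := by
  set P1 : ℝ := ∑ i, x i with hP1def
  set P2 : ℝ := ∑ i, (x i) ^ 2 with hP2def
  set P3 : ℝ := ∑ i, (x i) ^ 3 with hP3def
  set P4 : ℝ := ∑ i, (x i) ^ 4 with hP4def
  have he1 : esymm n 1 x = P1 := esymm_one_eq n x
  have he2 : 2 * esymm n 2 x = P1 * P1 - P2 := esymm_two_eq n x
  have he3 : 3 * esymm n 3 x = esymm n 2 x * P1 - P1 * P2 + P3 := esymm_three_eq n x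
  have hnR : (3 : ℝ) ≤ (n : ℝ) := by exact_mod_cast hn
  have hP2nonneg : 0 ≤ P2 := Finset.sum_nonneg fun i _ => by positivity
  have hP1nonneg : 0 ≤ P1 := by rw [← he1]; exact hS1
  have hS : P2 ≤ P1 ^ 2 := by nlinarith [hS2, he2]
  have hCS : P1 ^ 2 ≤ (n : ℝ) * P2 := by
    have := sq_sum_le_card_mul_sum_sq (s := (Finset.univ : Finset (Fin n))) (f := x)
    simpa [Finset.card_univ] using this
  have hT : 0 ≤ ((n : ℝ) + 1) * P1 * P2 - P1 ^ 3 - (n : ℝ) * P3 := by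
    rcases eq_or_lt_of_le hP1nonneg with h0 | hpos
    · have hP2zero : P2 = 0 := le_antisymm (by nlinarith) hP2nonneg
      have hP3zero : P3 = 0 := by
        apply Finset.sum_eq_zero
        intro i _
        have hle : (x i) ^ 2 ≤ P2 := by
          rw [hP2def]
          exact Finset.single_le_sum (f := fun j => (x j) ^ 2)
            (fun j _ => by positivity) (Finset.mem_univ i)
        have hxi : x i = 0 := by nlinarith [sq_nonneg (x i)]
        simp [hxi]
      rw [hP3zero, ← h0]
      norm_num
    · have hFid : ∑ i, ∑ j, (x i - x j) ^ 2 * (x i + x j - P1) ^ 2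
          = 2 * (n : ℝ) * (P4 - 2 * P1 * P3 + P1 ^ 2 * P2) - 2 * (P2 - P1 ^ 2) ^ 2 := by
        have step : ∀ i : Fin n, ∑ j, (x i - x j) ^ 2 * (x i + x j - P1) ^ 2
            = (1 : ℝ) * P4 + (-2 * P1) * P3 + (P1 ^ 2 - 2 * ((x i) ^ 2 - P1 * x i)) * P2
              + (2 * ((x i) ^ 2 - P1 * x i) * P1) * P1 + (n : ℝ) * ((x i) ^ 2 - P1 * x i) ^ 2 := by
          intro i
          rw [Finset.sum_congr rfl (fun j _ => by ring :
            ∀ j ∈ (Finset.univ : Finset (Fin n)),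
              (x i - x j) ^ 2 * (x i + x j - P1) ^ 2
                = (1 : ℝ) * (x j) ^ 4 + (-2 * P1) * (x j) ^ 3
                  + (P1 ^ 2 - 2 * ((x i) ^ 2 - P1 * x i)) * (x j) ^ 2
                  + (2 * ((x i) ^ 2 - P1 * x i) * P1) * (x j)
                  + ((x i) ^ 2 - P1 * x i) ^ 2)]
          rw [sum_poly4]
        rw [Finset.sum_congr rfl (fun i _ => step i)]
        rw [Finset.sum_congr rfl (fun i _ => by ring :
          ∀ i ∈ (Finset.univ : Finset (Fin n)),
            (1 : ℝ) * P4 + (-2 * P1) * P3 + (P1 ^ 2 - 2 * ((x i) ^ 2 - P1 * x i)) * P2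
              + (2 * ((x i) ^ 2 - P1 * x i) * P1) * P1 + (n : ℝ) * ((x i) ^ 2 - P1 * x i) ^ 2
            = (n : ℝ) * (x i) ^ 4 + (-2 * (n : ℝ) * P1) * (x i) ^ 3
              + (-2 * P2 + 2 * P1 ^ 2 + (n : ℝ) * P1 ^ 2) * (x i) ^ 2
              + (2 * P1 * P2 - 2 * P1 ^ 3) * (x i)
              + (P4 - 2 * P1 * P3 + P1 ^ 2 * P2))]
        rw [sum_poly4]
        ring
      have hF : 0 ≤ 2 * (n : ℝ) * (P4 - 2 * P1 * P3 + P1 ^ 2 * P2)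
          - 2 * (P2 - P1 ^ 2) ^ 2 := by
        rw [← hFid]
        exact Finset.sum_nonneg fun i _ => Finset.sum_nonneg fun j _ => by positivity
      have hHid : ∑ k, (x k) ^ 2 * (((n : ℝ) - 1) * (P2 - (x k) ^ 2) - (P1 - x k) ^ 2)
          = -(n : ℝ) * P4 + 2 * P1 * P3 + (((n : ℝ) - 1) * P2 - P1 ^ 2) * P2 := by
        rw [Finset.sum_congr rfl (fun k _ => by ring :
          ∀ k ∈ (Finset.univ : Finset (Fin n)),
            (x k) ^ 2 * (((n : ℝ) - 1) * (P2 - (x k) ^ 2) - (P1 - x k) ^ 2)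
            = (-(n : ℝ)) * (x k) ^ 4 + (2 * P1) * (x k) ^ 3
              + (((n : ℝ) - 1) * P2 - P1 ^ 2) * (x k) ^ 2 + 0 * (x k) + 0)]
        rw [sum_poly4]
        ring
      have hH : 0 ≤ -(n : ℝ) * P4 + 2 * P1 * P3 + (((n : ℝ) - 1) * P2 - P1 ^ 2) * P2 := by
        rw [← hHid]
        apply Finset.sum_nonneg
        intro k _
        apply mul_nonneg (by positivity)
        have hsum : ∑ j ∈ Finset.univ.erase k, x j = P1 - x k := by
          have h := Finset.sum_erase_add Finset.univ x (Finset.mem_univ k)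
          rw [hP1def]
          linarith [h]
        have hsumsq : ∑ j ∈ Finset.univ.erase k, (x j) ^ 2 = P2 - (x k) ^ 2 := by
          have h := Finset.sum_erase_add Finset.univ (fun j => (x j) ^ 2) (Finset.mem_univ k)
          rw [hP2def]
          linarith [h]
        have hcard : (((Finset.univ.erase k).card : ℕ) : ℝ) = (n : ℝ) - 1 := by
          rw [Finset.card_erase_of_mem (Finset.mem_univ k), Finset.card_univ, Fintype.card_fin,
            Nat.cast_sub (by omega), Nat.cast_one]
        have hcs := sq_sum_le_card_mul_sum_sq (s := Finset.univ.erase k) (f := x)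
        rw [hsum, hsumsq, hcard] at hcs
        linarith
      -- combine via the algebraic identity
      have hSC : 0 ≤ (P1 ^ 2 - P2) * ((n : ℝ) * P2 - P1 ^ 2) :=
        mul_nonneg (by linarith) (by linarith)
      have lin : 2 * ((n : ℝ) - 1) * P1 * (((n : ℝ) + 1) * P1 * P2 - P1 ^ 3 - (n : ℝ) * P3)
          = ((n : ℝ) / 2) * (2 * (n : ℝ) * (P4 - 2 * P1 * P3 + P1 ^ 2 * P2)
              - 2 * (P2 - P1 ^ 2) ^ 2)
            + (n : ℝ) * (-(n : ℝ) * P4 + 2 * P1 * P3 + (((n : ℝ) - 1) * P2 - P1 ^ 2) * P2)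
            + ((n : ℝ) - 2) * ((P1 ^ 2 - P2) * ((n : ℝ) * P2 - P1 ^ 2)) := by
        ring
      have hprod : 0 ≤ 2 * ((n : ℝ) - 1) * P1
          * (((n : ℝ) + 1) * P1 * P2 - P1 ^ 3 - (n : ℝ) * P3) := by
        rw [lin]
        have t1 : 0 ≤ ((n : ℝ) / 2) * (2 * (n : ℝ) * (P4 - 2 * P1 * P3 + P1 ^ 2 * P2)
            - 2 * (P2 - P1 ^ 2) ^ 2) := mul_nonneg (by linarith) hF
        have t2 : 0 ≤ (n : ℝ) * (-(n : ℝ) * P4 + 2 * P1 * P3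
            + (((n : ℝ) - 1) * P2 - P1 ^ 2) * P2) := mul_nonneg (by linarith) hH
        have t3 : 0 ≤ ((n : ℝ) - 2) * ((P1 ^ 2 - P2) * ((n : ℝ) * P2 - P1 ^ 2)) :=
          mul_nonneg (by linarith) hSC
        linarith
      have hK : 0 < 2 * ((n : ℝ) - 1) * P1 :=
        mul_pos (by linarith) hpos
      nlinarith [hprod, hK]
  have hgoal1 : 3 * (n : ℝ) * esymm n 3 x ≤ ((n : ℝ) - 2) * esymm n 1 x * esymm n 2 x := by
    have expand : ((n : ℝ) - 2) * esymm n 1 x * esymm n 2 x - 3 * (n : ℝ) * esymm n 3 x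
        = ((n : ℝ) + 1) * P1 * P2 - P1 ^ 3 - (n : ℝ) * P3 := by
      linear_combination (((n : ℝ) - 2) * esymm n 2 x) * he1
        + (-P1) * he2 + (-(n : ℝ)) * he3
    linarith [hT, expand]
  refine ⟨hgoal1, ?_⟩
  have hn0 : (0 : ℝ) < (n : ℝ) := by linarith
  rw [neg_mul, neg_le_neg_iff, div_mul_eq_mul_div, le_div_iff₀ hn0]
  nlinarith [hgoal1]
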